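/- Let X₀, ..., X_k be independent mean-zero random vectors in ℝ^d with ‖X_i‖ ≤ G almost surely, and let S = ∑ X_i. Then for any unit vector y ∈ ℝ^d, the operator norm of E[(yᵀS)·S Sᵀ] is at most (k+1)²·G³. -/

import Mathlib

open MeasureTheory
open scoped RealInnerProductSpace

open ProbabilityTheory in
lemma integral_inner_indep {d : ℕ} {Ω : Type*} [MeasurableSpace Ω] (μ : Measure Ω)
    [IsProbabilityMeasure μ] {f g : Ω → EuclideanSpace ℝ (Fin d)}
    (hf : Measurable f) (hg : Measurable g)
    (h : IndepFun f g μ) (hfint : Integrable f μ) (hgint : Integrable g μ)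
    (hfm : ∫ ω, f ω ∂μ = 0) : ∫ ω, ⟪f ω, g ω⟫ ∂μ = 0 := by
  have hinner : ∀ ω, ⟪f ω, g ω⟫ = ∑ c : Fin d, f ω c * g ω c := by
    intro ω; simp [PiLp.inner_apply, RCLike.inner_apply, mul_comm]
  have hint : ∀ c : Fin d, Integrable (fun ω => f ω c * g ω c) μ := by
    intro c
    have hic : IndepFun (fun ω => f ω c) (fun ω => g ω c) μ :=
      by have := h.comp (EuclideanSpace.proj c (𝕜 := ℝ)).continuous.measurable (EuclideanSpace.proj c (𝕜 := ℝ)).continuous.measurable; exact this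
    exact hic.integrable_mul ((EuclideanSpace.proj c (𝕜 := ℝ)).integrable_comp hfint)
      ((EuclideanSpace.proj c (𝕜 := ℝ)).integrable_comp hgint)
  calc ∫ ω, ⟪f ω, g ω⟫ ∂μ = ∫ ω, ∑ c : Fin d, f ω c * g ω c ∂μ := by simp_rw [hinner]
    _ = ∑ c : Fin d, ∫ ω, f ω c * g ω c ∂μ := integral_finset_sum _ (fun c _ => hint c)
    _ = 0 := by
        apply Finset.sum_eq_zero
        intro c _
        have hic : IndepFun (fun ω => f ω c) (fun ω => g ω c) μ :=
          by have := h.comp (EuclideanSpace.proj c (𝕜 := ℝ)).continuous.measurable (EuclideanSpace.proj c (𝕜 := ℝ)).continuous.measurable; exact this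
        rw [hic.integral_fun_mul_eq_mul_integral ((EuclideanSpace.proj c (𝕜 := ℝ)).continuous.measurable.comp hf).aestronglyMeasurable
          ((EuclideanSpace.proj c (𝕜 := ℝ)).continuous.measurable.comp hg).aestronglyMeasurable]
        have h1 : ∫ ω, f ω c ∂μ = 0 := by
          have := (EuclideanSpace.proj c (𝕜 := ℝ)).integral_comp_comm hfint
          rw [hfm] at this
          simpa using this
        rw [h1, zero_mul]

set_option synthInstance.maxHeartbeats 1000000 in
set_option maxHeartbeats 1000000 in
theorem third_moment_operator_bound (d k : ℕ) (hd : 0 < d) (G : ℝ) (hG : 0 < G)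
    {Ω : Type*} [MeasurableSpace Ω] (μ : Measure Ω) [IsProbabilityMeasure μ]
    (X : Fin (k + 1) → Ω → EuclideanSpace ℝ (Fin d))
    (hmeas : ∀ i, Measurable (X i))
    (hindep : ProbabilityTheory.iIndepFun X μ)
    (hint : ∀ i, Integrable (X i) μ)
    (hmean : ∀ i, ∫ ω, X i ω ∂μ = 0)
    (hbound : ∀ i, ∀ᵐ ω ∂μ, ‖X i ω‖ ≤ G)
    (y : EuclideanSpace ℝ (Fin d)) (hy : ‖y‖ = 1) :
    ‖∫ ω, ⟪y, ∑ i, X i ω⟫ •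
        (innerSL ℝ (∑ i, X i ω)).smulRight (∑ i, X i ω) ∂μ‖
      ≤ ((k : ℝ) + 1) ^ 2 * G ^ 3 := by
  set S : Ω → EuclideanSpace ℝ (Fin d) := fun ω => ∑ i, X i ω with hS
  have hSmeas : Measurable S := Finset.measurable_sum _ (fun i _ => hmeas i)
  have hSbound : ∀ᵐ ω ∂μ, ‖S ω‖ ≤ ((k : ℝ) + 1) * G := by
    filter_upwards [ae_all_iff.2 hbound] with ω hω
    calc ‖S ω‖ ≤ ∑ i, ‖X i ω‖ := norm_sum_le _ _
      _ ≤ ∑ _i : Fin (k+1), G := Finset.sum_le_sum (fun i _ => hω i)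
      _ = ((k : ℝ) + 1) * G := by
          rw [Finset.sum_const, Finset.card_univ, Fintype.card_fin, nsmul_eq_mul]
          push_cast; ring
  have hprod : ∀ i j, Integrable (fun ω => ⟪X i ω, X j ω⟫) μ := by
    intro i j
    refine ⟨((hmeas i).inner (hmeas j)).aestronglyMeasurable, ?_⟩
    apply HasFiniteIntegral.of_bounded (C := G * G)
    filter_upwards [hbound i, hbound j] with ω h1 h2
    calc ‖⟪X i ω, X j ω⟫‖ ≤ ‖X i ω‖ * ‖X j ω‖ := norm_inner_le_norm _ _
      _ ≤ G * G := mul_le_mul h1 h2 (norm_nonneg _) hG.le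
  have hSsq_int : Integrable (fun ω => ‖S ω‖ ^ 2) μ := by
    refine ⟨(hSmeas.norm.pow_const 2).aestronglyMeasurable, ?_⟩
    apply HasFiniteIntegral.of_bounded (C := (((k : ℝ) + 1) * G) ^ 2)
    filter_upwards [hSbound] with ω hω
    rw [Real.norm_eq_abs, abs_of_nonneg (by positivity)]
    exact pow_le_pow_left₀ (norm_nonneg _) hω 2
  have hSsq : ∫ ω, ‖S ω‖ ^ 2 ∂μ ≤ ((k : ℝ) + 1) * G ^ 2 := by
    have hexp : ∀ ω, ‖S ω‖ ^ 2 = ∑ i, ∑ j, ⟪X i ω, X j ω⟫ := by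
      intro ω
      rw [← real_inner_self_eq_norm_sq]
      simp only [hS, inner_sum, sum_inner]
      exact Finset.sum_comm
    have h1 : ∫ ω, ‖S ω‖ ^ 2 ∂μ = ∑ i, ∑ j, ∫ ω, ⟪X i ω, X j ω⟫ ∂μ := by
      simp_rw [hexp]
      rw [integral_finset_sum _ (fun i _ => integrable_finset_sum _ (fun j _ => hprod i j))]
      exact Finset.sum_congr rfl (fun i _ => integral_finset_sum _ (fun j _ => hprod i j))
    have h2 : ∀ i j, i ≠ j → ∫ ω, ⟪X i ω, X j ω⟫ ∂μ = 0 := by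
      intro i j hij
      exact integral_inner_indep μ (hmeas i) (hmeas j) (hindep.indepFun hij)
        (hint i) (hint j) (hmean i)
    have h3 : ∀ i, ∫ ω, ⟪X i ω, X i ω⟫ ∂μ ≤ G ^ 2 := by
      intro i
      have : ∫ ω, ⟪X i ω, X i ω⟫ ∂μ ≤ ∫ _ω, G ^ 2 ∂μ := by
        apply integral_mono_ae (hprod i i) (integrable_const _)
        filter_upwards [hbound i] with ω hω
        rw [real_inner_self_eq_norm_sq]
        exact pow_le_pow_left₀ (norm_nonneg _) hω 2
      simpa using this
    rw [h1]
    calc ∑ i, ∑ j, ∫ ω, ⟪X i ω, X j ω⟫ ∂μ = ∑ i : Fin (k+1), ∫ ω, ⟪X i ω, X i ω⟫ ∂μ := by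
          refine Finset.sum_congr rfl (fun i _ => ?_)
          exact Finset.sum_eq_single i (fun j _ hji => h2 i j (Ne.symm hji)) (by simp)
      _ ≤ ∑ _i : Fin (k+1), G ^ 2 := Finset.sum_le_sum (fun i _ => h3 i)
      _ = ((k : ℝ) + 1) * G ^ 2 := by
          rw [Finset.sum_const, Finset.card_univ, Fintype.card_fin, nsmul_eq_mul]
          push_cast; ring
  have hF : ∀ᵐ ω ∂μ, ‖⟪y, S ω⟫ • (innerSL ℝ (S ω)).smulRight (S ω)‖
      ≤ ((k : ℝ) + 1) * G * ‖S ω‖ ^ 2 := by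
    filter_upwards [hSbound] with ω hω
    refine le_trans (ContinuousLinearMap.opNorm_smul_le _ _) ?_
    have h1 : ‖⟪y, S ω⟫‖ ≤ ‖S ω‖ := by
      calc ‖⟪y, S ω⟫‖ ≤ ‖y‖ * ‖S ω‖ := norm_inner_le_norm _ _
        _ = ‖S ω‖ := by rw [hy, one_mul]
    have h2 : ‖(innerSL ℝ (S ω)).smulRight (S ω)‖ ≤ ‖S ω‖ * ‖S ω‖ := by
      rw [ContinuousLinearMap.norm_smulRight_apply]
      gcongr
      exact (innerSL_apply_norm ℝ _).le
    calc ‖⟪y, S ω⟫‖ * ‖(innerSL ℝ (S ω)).smulRight (S ω)‖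
        ≤ ‖S ω‖ * (‖S ω‖ * ‖S ω‖) :=
          mul_le_mul h1 h2 (norm_nonneg _) (norm_nonneg _)
      _ = ‖S ω‖ * ‖S ω‖ ^ 2 := by ring
      _ ≤ ((k : ℝ) + 1) * G * ‖S ω‖ ^ 2 := by
          nlinarith [norm_nonneg (S ω), sq_nonneg ‖S ω‖]
  calc ‖∫ ω, ⟪y, ∑ i, X i ω⟫ • (innerSL ℝ (∑ i, X i ω)).smulRight (∑ i, X i ω) ∂μ‖
      ≤ ∫ ω, ‖⟪y, S ω⟫ • (innerSL ℝ (S ω)).smulRight (S ω)‖ ∂μ :=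
        norm_integral_le_integral_norm _
    _ ≤ ∫ ω, ((k : ℝ) + 1) * G * ‖S ω‖ ^ 2 ∂μ := by
        apply integral_mono_of_nonneg (Filter.Eventually.of_forall (fun ω => norm_nonneg _))
          (hSsq_int.const_mul _) hF
    _ = ((k : ℝ) + 1) * G * ∫ ω, ‖S ω‖ ^ 2 ∂μ := integral_const_mul _ _
    _ ≤ ((k : ℝ) + 1) * G * (((k : ℝ) + 1) * G ^ 2) :=
        mul_le_mul_of_nonneg_left hSsq (by positivity)
    _ = ((k : ℝ) + 1) ^ 2 * G ^ 3 := by ring
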